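/- arXiv:1512.06331 — 2 statements merged into one kernel-verified Lean document; each statement's English description precedes it below -/
import Mathlib

section
/- There exists a constant C > 0 depending only on the dimension n such that the following holds. Let φ : ℝⁿ → ℝ be a measurable function that is 1-periodic in each coordinate (i.e. φ(x + e_i) = φ(x) for every x ∈ ℝⁿ and every standard basis vector e_i) and bounded, with |φ(x)| ≤ M for all x. Then for every 0 < ε ≤ δ and every x₀ ∈ ℝⁿ, writing K_δ for the cube x₀ + [0, δ]ⁿ, one has | δ^{-n} ∫_{K_δ} φ(x/ε) dx − ∫_{[0,1]ⁿ} φ(y) dy | ≤ C · M · (ε/δ). -/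
open MeasureTheory

open Set Pointwise

variable {n : ℕ}

abbrev OscLat (n : ℕ) : AddSubgroup (Fin n → ℝ) :=
  (Submodule.span ℤ (Set.range (Pi.basisFun ℝ (Fin n)))).toAddSubgroup

instance : Countable (OscLat n) :=
  (inferInstance : Countable (Submodule.span ℤ (Set.range (Pi.basisFun ℝ (Fin n)))))

lemma lat_periodic (φ : (Fin n → ℝ) → ℝ)
    (hper : ∀ (x : Fin n → ℝ) (i : Fin n), φ (x + Pi.single i 1) = φ x) :
    ∀ (g : OscLat n) (x : Fin n → ℝ), φ (g +ᵥ x) = φ x := by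
  have key : ∀ v ∈ OscLat n, ∀ x, φ (x + v) = φ x := by
    intro v hv
    set H : AddSubgroup (Fin n → ℝ) :=
      { carrier := {v | ∀ x, φ (x + v) = φ x}
        zero_mem' := by intro x; simp
        add_mem' := by
          intro u w hu hw x
          rw [← add_assoc, hw, hu]
        neg_mem' := by
          intro u hu x
          have := hu (x + -u)
          rw [add_assoc, neg_add_cancel, add_zero] at this
          exact this.symm } with hH
    have hle : OscLat n ≤ H := by
      have : Submodule.span ℤ (Set.range (Pi.basisFun ℝ (Fin n))) ≤
          AddSubgroup.toIntSubmodule H := by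
        rw [Submodule.span_le]
        rintro _ ⟨i, rfl⟩
        intro x
        simpa using hper x i
      exact fun y hy => this hy
    exact hle hv
  intro g x
  have := key g g.2 x
  rw [add_comm] at this
  simpa [AddSubgroup.vadd_def] using this

def cellSet (c : Fin n → ℝ) : Set (Fin n → ℝ) := univ.pi fun i => Ico (c i) (c i + 1)

lemma fd_eq (n : ℕ) : ZSpan.fundamentalDomain (Pi.basisFun ℝ (Fin n)) = cellSet (0 : Fin n → ℝ) := by
  ext x
  simp [ZSpan.fundamentalDomain, cellSet]

lemma cell_fd (c : Fin n → ℝ) : IsAddFundamentalDomain (OscLat n) (cellSet c) volume := by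
  have h0 : IsAddFundamentalDomain (OscLat n) (cellSet (0 : Fin n → ℝ)) volume := by
    rw [← fd_eq]; exact ZSpan.isAddFundamentalDomain' (Pi.basisFun ℝ (Fin n)) volume
  have hq : Measure.QuasiMeasurePreserving (⇑(Equiv.addLeft c).symm)
      (volume : Measure (Fin n → ℝ)) volume := by
    rw [Equiv.addLeft_symm]
    exact (measurePreserving_add_left volume (-c)).quasiMeasurePreserving
  have hef : ∀ g : OscLat n, Function.Semiconj (⇑(Equiv.addLeft c))
      (fun x => (Equiv.refl (OscLat n)) g +ᵥ x) (fun x => g +ᵥ x) := by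
    intro g x
    show c + ((g : Fin n → ℝ) + x) = (g : Fin n → ℝ) + (c + x)
    exact add_left_comm _ _ _
  have him := h0.image_of_equiv (Equiv.addLeft c) hq (Equiv.refl _) hef
  have himg : (⇑(Equiv.addLeft c)) '' cellSet (0 : Fin n → ℝ) = cellSet c := by
    ext x
    constructor
    · rintro ⟨y, hy, rfl⟩
      intro i _
      have h1 : (0:ℝ) ≤ y i := by simpa using (hy i (mem_univ i)).1
      have h2 : y i < 1 := by simpa using (hy i (mem_univ i)).2
      have hx : (Equiv.addLeft c) y = c + y := rfl
      rw [hx]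
      exact ⟨by simpa using h1, by simpa [Pi.add_apply] using h2⟩
    · intro hx
      refine ⟨x - c, fun i _ => ?_, by simp⟩
      have h1 := (hx i (mem_univ i)).1
      have h2 := (hx i (mem_univ i)).2
      constructor
      · simpa using h1
      · have h3 : x i - c i < 1 := by linarith
        simpa using h3
  rwa [himg] at him

lemma cell_integral (φ : (Fin n → ℝ) → ℝ)
    (hper : ∀ (x : Fin n → ℝ) (i : Fin n), φ (x + Pi.single i 1) = φ x)
    (c : Fin n → ℝ) :
    ∫ x in cellSet c, φ x = ∫ x in cellSet (0 : Fin n → ℝ), φ x :=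
  (cell_fd c).setIntegral_eq (cell_fd 0) (lat_periodic φ hper)

lemma Ico_nat_decomp (b : ℝ) (m : ℕ) :
    Ico b (b + m) = ⋃ j : Fin m, Ico (b + (j : ℕ)) (b + (j : ℕ) + 1) := by
  ext x
  simp only [mem_Ico, mem_iUnion]
  constructor
  · rintro ⟨h1, h2⟩
    have h0 : (0:ℝ) ≤ x - b := by linarith
    have hjm : ⌊x - b⌋₊ < m := (Nat.floor_lt h0).2 (by linarith)
    refine ⟨⟨⌊x - b⌋₊, hjm⟩, ?_, ?_⟩
    · have := Nat.floor_le h0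
      simp only []
      linarith
    · have := Nat.lt_floor_add_one (x - b)
      simp only []
      linarith
  · rintro ⟨j, hj1, hj2⟩
    have hjm : ((j : ℕ) : ℝ) + 1 ≤ m := by exact_mod_cast Nat.succ_le_of_lt j.2
    have hj0 : (0:ℝ) ≤ ((j : ℕ) : ℝ) := Nat.cast_nonneg _
    exact ⟨by linarith, by linarith⟩

lemma Ico_nat_mem (b x : ℝ) (m : ℕ) :
    x ∈ Ico b (b + m) ↔ ∃ j : Fin m, x ∈ Ico (b + ((j : ℕ) : ℝ)) (b + ((j : ℕ) : ℝ) + 1) := by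
  rw [Ico_nat_decomp b m, mem_iUnion]

lemma pi_decomp (a : Fin n → ℝ) (m : ℕ) :
    univ.pi (fun i => Ico (a i) (a i + (m : ℝ))) =
      ⋃ k : Fin n → Fin m, cellSet (fun i => a i + ((k i : ℕ) : ℝ)) := by
  ext x
  simp only [cellSet, mem_pi, mem_univ, true_implies, mem_iUnion]
  constructor
  · intro h
    choose j hj using fun i => (Ico_nat_mem (a i) (x i) m).1 (h i)
    exact ⟨j, fun i => hj i⟩
  · rintro ⟨k, hk⟩ i
    exact (Ico_nat_mem _ _ m).2 ⟨k i, hk i⟩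

lemma cells_disjoint (a : Fin n → ℝ) (m : ℕ) :
    Pairwise (Function.onFun Disjoint
      (fun k : Fin n → Fin m => cellSet (fun i => a i + ((k i : ℕ) : ℝ)))) := by
  intro k k' hkk'
  obtain ⟨i, hi⟩ : ∃ i, k i ≠ k' i := by
    by_contra h; push_neg at h; exact hkk' (funext h)
  refine Set.disjoint_left.mpr fun x hx hx' => ?_
  have h1 : a i + ((k i : ℕ) : ℝ) ≤ x i ∧ x i < a i + ((k i : ℕ) : ℝ) + 1 := by
    simpa using hx i (mem_univ i)
  have h2 : a i + ((k' i : ℕ) : ℝ) ≤ x i ∧ x i < a i + ((k' i : ℕ) : ℝ) + 1 := by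
    simpa using hx' i (mem_univ i)
  have n1 : (k i : ℕ) < (k' i : ℕ) + 1 := by
    have : ((k i : ℕ) : ℝ) < ((k' i : ℕ) : ℝ) + 1 := by linarith [h1.1, h2.2]
    exact_mod_cast this
  have n2 : (k' i : ℕ) < (k i : ℕ) + 1 := by
    have : ((k' i : ℕ) : ℝ) < ((k i : ℕ) : ℝ) + 1 := by linarith [h2.1, h1.2]
    exact_mod_cast this
  exact hi (Fin.ext (le_antisymm (Nat.lt_succ_iff.1 n1) (Nat.lt_succ_iff.1 n2)))

lemma cellSet_measurable (c : Fin n → ℝ) : MeasurableSet (cellSet c) :=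
  MeasurableSet.univ_pi fun _ => measurableSet_Ico

lemma int_on (φ : (Fin n → ℝ) → ℝ) (hm : Measurable φ) {M : ℝ}
    (hb : ∀ x, |φ x| ≤ M) (s : Set (Fin n → ℝ)) (hs : volume s ≠ ⊤) :
    IntegrableOn φ s volume :=
  Measure.integrableOn_of_bounded hs hm.aestronglyMeasurable
    (ae_of_all _ fun x => by simpa [Real.norm_eq_abs] using hb x)

lemma pi_Ico_volume (a : Fin n → ℝ) {r : ℝ} (hr : 0 ≤ r) :
    volume (univ.pi fun i => Ico (a i) (a i + r)) = ENNReal.ofReal r ^ n := by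
  rw [volume_pi_pi]
  simp [Real.volume_Ico]

lemma big_cube_integral (φ : (Fin n → ℝ) → ℝ) (hm : Measurable φ)
    (hper : ∀ (x : Fin n → ℝ) (i : Fin n), φ (x + Pi.single i 1) = φ x)
    {M : ℝ} (hb : ∀ x, |φ x| ≤ M) (a : Fin n → ℝ) (m : ℕ) :
    ∫ x in univ.pi (fun i => Ico (a i) (a i + (m : ℝ))), φ x
      = (m : ℝ) ^ n * ∫ x in cellSet (0 : Fin n → ℝ), φ x := by
  have hvol : volume (univ.pi fun i => Ico (a i) (a i + (m : ℝ))) ≠ ⊤ := by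
    rw [pi_Ico_volume a (Nat.cast_nonneg m)]
    exact ENNReal.pow_ne_top ENNReal.ofReal_ne_top
  have hint := int_on φ hm hb _ hvol
  rw [pi_decomp a m] at hint ⊢
  rw [integral_iUnion (fun k => cellSet_measurable _) (cells_disjoint a m) hint]
  have hcell : ∀ k : Fin n → Fin m,
      ∫ x in cellSet (fun i => a i + ((k i : ℕ) : ℝ)), φ x
        = ∫ x in cellSet (0 : Fin n → ℝ), φ x :=
    fun k => cell_integral φ hper _
  simp_rw [hcell]
  rw [tsum_fintype]
  rw [Finset.sum_const, Finset.card_univ]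
  simp [Fintype.card_fun, mul_comm]

lemma cell0_volume : volume (cellSet (0 : Fin n → ℝ)) = 1 := by
  rw [cellSet, volume_pi_pi]
  simp [Real.volume_Ico]

lemma abs_I_le (φ : (Fin n → ℝ) → ℝ) {M : ℝ} (hb : ∀ x, |φ x| ≤ M) :
    |∫ x in cellSet (0 : Fin n → ℝ), φ x| ≤ M := by
  have h := norm_setIntegral_le_of_norm_le_const (f := φ) (μ := volume)
    (s := cellSet (0 : Fin n → ℝ)) (C := M) (by rw [cell0_volume]; exact ENNReal.one_lt_top)
    (fun x _ => by simpa [Real.norm_eq_abs] using hb x)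
  rw [measureReal_def, cell0_volume] at h
  simpa [Real.norm_eq_abs] using h

lemma pow_diff_le {L : ℝ} {m : ℕ} (hL : 1 ≤ L) (hmL : (m : ℝ) ≤ L) (hLm : L ≤ (m : ℝ) + 1)
    (hn : 1 ≤ n) : L ^ n - (m : ℝ) ^ n ≤ n * L ^ (n - 1) := by
  have hL0 : (0 : ℝ) ≤ L := by linarith
  have hm0 : (0 : ℝ) ≤ (m : ℝ) := Nat.cast_nonneg m
  have key : L ^ n - (m : ℝ) ^ n
      = (∑ i ∈ Finset.range n, L ^ i * (m : ℝ) ^ (n - 1 - i)) * (L - m) :=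
    (geom_sum₂_mul L (m : ℝ) n).symm
  rw [key]
  have hsum : (∑ i ∈ Finset.range n, L ^ i * (m : ℝ) ^ (n - 1 - i)) ≤ n * L ^ (n - 1) := by
    have : ∀ i ∈ Finset.range n, L ^ i * (m : ℝ) ^ (n - 1 - i) ≤ L ^ (n - 1) := by
      intro i hi
      rw [Finset.mem_range] at hi
      calc L ^ i * (m : ℝ) ^ (n - 1 - i) ≤ L ^ i * L ^ (n - 1 - i) := by
            apply mul_le_mul_of_nonneg_left (pow_le_pow_left₀ hm0 hmL _) (pow_nonneg hL0 _)
        _ = L ^ (i + (n - 1 - i)) := (pow_add L i (n - 1 - i)).symm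
        _ = L ^ (n - 1) := by congr 1; omega
    calc (∑ i ∈ Finset.range n, L ^ i * (m : ℝ) ^ (n - 1 - i))
        ≤ ∑ i ∈ Finset.range n, L ^ (n - 1) := Finset.sum_le_sum this
      _ = n * L ^ (n - 1) := by rw [Finset.sum_const, Finset.card_range, nsmul_eq_mul]
  have hsum0 : (0:ℝ) ≤ ∑ i ∈ Finset.range n, L ^ i * (m : ℝ) ^ (n - 1 - i) :=
    Finset.sum_nonneg fun i _ => mul_nonneg (pow_nonneg hL0 _) (pow_nonneg hm0 _)
  calc (∑ i ∈ Finset.range n, L ^ i * (m : ℝ) ^ (n - 1 - i)) * (L - m)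
      ≤ (n * L ^ (n - 1)) * 1 := by
        apply mul_le_mul hsum (by linarith) (by linarith) ?_
        positivity
    _ = n * L ^ (n - 1) := mul_one _

lemma key_estimate (hn : 1 ≤ n) (φ : (Fin n → ℝ) → ℝ) (hm : Measurable φ)
    (hper : ∀ (x : Fin n → ℝ) (i : Fin n), φ (x + Pi.single i 1) = φ x)
    {M : ℝ} (hb : ∀ x, |φ x| ≤ M) {L : ℝ} (hL : 1 ≤ L) (a : Fin n → ℝ) :
    |(L ^ n)⁻¹ * (∫ x in univ.pi (fun i => Ico (a i) (a i + L)), φ x)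
      - ∫ x in cellSet (0 : Fin n → ℝ), φ x| ≤ 2 * n * M / L := by
  have hM0 : 0 ≤ M := le_trans (abs_nonneg _) (hb 0)
  have hL0 : (0:ℝ) < L := by linarith
  set I := ∫ x in cellSet (0 : Fin n → ℝ), φ x with hI
  set m : ℕ := ⌊L⌋₊ with hmdef
  have hm1 : 1 ≤ m := Nat.one_le_iff_ne_zero.mpr (by
    simp only [hmdef, ne_eq, Nat.floor_eq_zero, not_lt]; exact hL)
  have hmL : (m : ℝ) ≤ L := Nat.floor_le (by linarith)
  have hLm : L ≤ (m : ℝ) + 1 := le_of_lt (Nat.lt_floor_add_one L)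
  -- sets
  set t := univ.pi (fun i => Ico (a i) (a i + L)) with ht
  set s := univ.pi (fun i => Ico (a i) (a i + (m : ℝ))) with hs
  have hst : s ⊆ t := by
    intro x hx i _
    have := hx i (mem_univ i)
    exact ⟨this.1, lt_of_lt_of_le this.2 (by linarith [this.2])⟩
  have hsm : MeasurableSet s := MeasurableSet.univ_pi fun _ => measurableSet_Ico
  have htm : MeasurableSet t := MeasurableSet.univ_pi fun _ => measurableSet_Ico
  have hvol_t : volume t = ENNReal.ofReal L ^ n := pi_Ico_volume a (by linarith)
  have hvol_s : volume s = ENNReal.ofReal (m : ℝ) ^ n := pi_Ico_volume a (Nat.cast_nonneg m)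
  have hvt : volume t ≠ ⊤ := by rw [hvol_t]; exact ENNReal.pow_ne_top ENNReal.ofReal_ne_top
  have hvs : volume s ≠ ⊤ := by rw [hvol_s]; exact ENNReal.pow_ne_top ENNReal.ofReal_ne_top
  have hint_t : IntegrableOn φ t volume := int_on φ hm hb t hvt
  -- the m-cube integral
  have hscube : ∫ x in s, φ x = (m : ℝ) ^ n * I := big_cube_integral φ hm hper hb a m
  -- difference set
  have hdiff : ∫ x in t \ s, φ x = (∫ x in t, φ x) - ∫ x in s, φ x :=
    integral_diff hsm hint_t hst
  have hvol_diff : volume (t \ s) = ENNReal.ofReal (L ^ n - (m:ℝ) ^ n) := by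
    rw [measure_diff hst hsm.nullMeasurableSet hvs, hvol_t, hvol_s,
      ← ENNReal.ofReal_pow (by linarith), ← ENNReal.ofReal_pow (Nat.cast_nonneg m),
      ← ENNReal.ofReal_sub _ (pow_nonneg (Nat.cast_nonneg m) n)]
  have hpow_le : L ^ n - (m : ℝ) ^ n ≤ n * L ^ (n - 1) := pow_diff_le hL hmL hLm hn
  have hpow_nonneg : 0 ≤ L ^ n - (m : ℝ) ^ n :=
    sub_nonneg.mpr (pow_le_pow_left₀ (Nat.cast_nonneg m) hmL n)
  have hR : |∫ x in t \ s, φ x| ≤ M * (L ^ n - (m:ℝ) ^ n) := by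
    have h := norm_setIntegral_le_of_norm_le_const (f := φ) (μ := volume)
      (s := t \ s) (C := M) (by rw [hvol_diff]; exact ENNReal.ofReal_lt_top)
      (fun x _ => by simpa [Real.norm_eq_abs] using hb x)
    rw [measureReal_def, hvol_diff, ENNReal.toReal_ofReal hpow_nonneg] at h
    simpa [Real.norm_eq_abs, mul_comm] using h
  have hI_le : |I| ≤ M := abs_I_le φ hb
  -- assemble
  have hmain : |(∫ x in t, φ x) - L ^ n * I| ≤ 2 * M * (n * L ^ (n - 1)) := by
    have e1 : (∫ x in t, φ x) - L ^ n * I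
        = (∫ x in t \ s, φ x) + ((m:ℝ) ^ n - L ^ n) * I := by
      rw [hdiff, hscube]; ring
    rw [e1]
    calc |(∫ x in t \ s, φ x) + ((m:ℝ) ^ n - L ^ n) * I|
        ≤ |∫ x in t \ s, φ x| + |((m:ℝ) ^ n - L ^ n) * I| := abs_add_le _ _
      _ ≤ M * (L ^ n - (m:ℝ) ^ n) + (L ^ n - (m:ℝ) ^ n) * M := by
          apply add_le_add hR
          rw [abs_mul, abs_sub_comm, abs_of_nonneg hpow_nonneg]
          exact mul_le_mul_of_nonneg_left hI_le hpow_nonneg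
      _ = 2 * M * (L ^ n - (m:ℝ) ^ n) := by ring
      _ ≤ 2 * M * (n * L ^ (n - 1)) := by
          apply mul_le_mul_of_nonneg_left hpow_le (by linarith)
  have hLn : (0:ℝ) < L ^ n := pow_pos hL0 n
  have e0 : (L ^ n)⁻¹ * ((∫ x in t, φ x) - L ^ n * I) = (L ^ n)⁻¹ * (∫ x in t, φ x) - I := by
    rw [mul_sub, ← mul_assoc, inv_mul_cancel₀ hLn.ne', one_mul]
  have e2 : |(L ^ n)⁻¹ * (∫ x in t, φ x) - I| = (L ^ n)⁻¹ * |(∫ x in t, φ x) - L ^ n * I| := by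
    rw [← e0, abs_mul, abs_of_pos (inv_pos.mpr hLn)]
  rw [e2]
  have hLpow : L ^ (n - 1) * L = L ^ n := by
    rw [← pow_succ]
    congr 1
    omega
  rw [inv_mul_le_iff₀ hLn]
  calc |(∫ x in t, φ x) - L ^ n * I| ≤ 2 * M * (n * L ^ (n - 1)) := hmain
    _ = 2 * n * M / L * (L ^ (n-1) * L) := by field_simp
    _ = 2 * n * M / L * L ^ n := by rw [hLpow]
    _ = L ^ n * (2 * n * M / L) := mul_comm _ _

lemma pi_Icc_eq_Ico_integral (φ : (Fin n → ℝ) → ℝ) (p q : Fin n → ℝ) :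
    ∫ x in univ.pi (fun i => Icc (p i) (q i)), φ x
      = ∫ x in univ.pi (fun i => Ico (p i) (q i)), φ x := by
  apply setIntegral_congr_set
  apply (ae_eq_of_subset_of_measure_ge
    (Set.pi_mono fun i _ => Ico_subset_Icc_self) ?_ ?_ ?_).symm
  · rw [volume_pi_pi, volume_pi_pi]
    simp [Real.volume_Icc, Real.volume_Ico]
  · exact (MeasurableSet.univ_pi fun _ => measurableSet_Ico).nullMeasurableSet
  · rw [volume_pi_pi]
    simp only [Real.volume_Icc]
    exact (ENNReal.prod_lt_top fun i _ => ENNReal.ofReal_lt_top).ne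

lemma unit_cell_integral (φ : (Fin n → ℝ) → ℝ) :
    ∫ y in Icc (0 : Fin n → ℝ) 1, φ y = ∫ x in cellSet (0 : Fin n → ℝ), φ x := by
  rw [← Set.pi_univ_Icc, pi_Icc_eq_Ico_integral φ 0 1]
  congr 1
  rw [cellSet]
  congr 1
  funext i
  norm_num

lemma smul_pi_Icc {c : ℝ} (hc : 0 < c) (p q : Fin n → ℝ) :
    c⁻¹ • univ.pi (fun i => Icc (p i) (q i))
      = univ.pi (fun i => Icc (c⁻¹ * p i) (c⁻¹ * q i)) := by
  have hc' : c⁻¹ ≠ 0 := (inv_pos.mpr hc).ne'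
  ext x
  rw [Set.mem_smul_set_iff_inv_smul_mem₀ hc']
  simp only [mem_pi, mem_univ, true_implies, mem_Icc, Pi.smul_apply, smul_eq_mul, inv_inv]
  have hinv : (0:ℝ) ≤ c⁻¹ := (inv_pos.mpr hc).le
  constructor
  · intro h i
    have h1 := (h i).1
    have h2 := (h i).2
    have e : c⁻¹ * (c * x i) = x i := by field_simp
    constructor
    · calc c⁻¹ * p i ≤ c⁻¹ * (c * x i) := mul_le_mul_of_nonneg_left h1 hinv
        _ = x i := e
    · calc x i = c⁻¹ * (c * x i) := e.symm
        _ ≤ c⁻¹ * q i := mul_le_mul_of_nonneg_left h2 hinv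
  · intro h i
    have h1 := (h i).1
    have h2 := (h i).2
    constructor
    · calc p i = c * (c⁻¹ * p i) := by field_simp
        _ ≤ c * x i := mul_le_mul_of_nonneg_left h1 hc.le
    · calc c * x i ≤ c * (c⁻¹ * q i) := mul_le_mul_of_nonneg_left h2 hc.le
        _ = q i := by field_simp


/-- Multidimensional averaging lemma (Lemma 3.3 of the paper): there is a constant
`C > 0`, depending only on the dimension `n`, such that for every bounded measurable
function `φ : ℝⁿ → ℝ` that is 1-periodic in each coordinate direction and bounded by
`M`, every `0 < ε ≤ δ` and every cube `K_δ = x₀ + [0, δ]ⁿ`, the average of `φ (x / ε)`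
over `K_δ` differs from the mean of `φ` over the unit cell `[0,1]ⁿ` by at most
`C * M * (ε / δ)`. -/
theorem oscillatory_average_cube (n : ℕ) :
    ∃ C : ℝ, 0 < C ∧
      ∀ (φ : (Fin n → ℝ) → ℝ), Measurable φ →
        (∀ (x : Fin n → ℝ) (i : Fin n), φ (x + Pi.single i 1) = φ x) →
        ∀ M : ℝ, (∀ x : Fin n → ℝ, |φ x| ≤ M) →
        ∀ ε δ : ℝ, 0 < ε → ε ≤ δ →
        ∀ x₀ : Fin n → ℝ,
          |(δ ^ n)⁻¹ * (∫ x in Set.Icc x₀ (fun i => x₀ i + δ), φ (ε⁻¹ • x)) -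
              ∫ y in Set.Icc (0 : Fin n → ℝ) 1, φ y| ≤
            C * M * (ε / δ) := by
  rcases Nat.eq_zero_or_pos n with hn | hn
  · subst hn
    refine ⟨1, one_pos, ?_⟩
    intro φ hφ hper M hb ε δ hε hεδ x₀
    have hδ : 0 < δ := lt_of_lt_of_le hε hεδ
    have hM0 : 0 ≤ M := le_trans (abs_nonneg _) (hb 0)
    have h1 : Set.Icc x₀ (fun i => x₀ i + δ) = Set.univ := by
      ext x
      simp only [Set.mem_Icc, Set.mem_univ, iff_true]
      exact ⟨fun i => i.elim0, fun i => i.elim0⟩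
    have h2 : Set.Icc (0 : Fin 0 → ℝ) 1 = Set.univ := by
      ext x
      simp only [Set.mem_Icc, Set.mem_univ, iff_true]
      exact ⟨fun i => i.elim0, fun i => i.elim0⟩
    have h3 : ∀ x : Fin 0 → ℝ, φ (ε⁻¹ • x) = φ x :=
      fun x => congrArg φ (Subsingleton.elim _ _)
    rw [h1, h2]
    simp only [pow_zero, inv_one, one_mul]
    rw [show (∫ x in (Set.univ : Set (Fin 0 → ℝ)), φ (ε⁻¹ • x))
        = ∫ x in (Set.univ : Set (Fin 0 → ℝ)), φ x from integral_congr_ae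
        (ae_of_all _ fun x => h3 x)]
    rw [sub_self, abs_zero]
    positivity
  · refine ⟨2 * n + 1, by positivity, ?_⟩
    intro φ hφ hper M hb ε δ hε hεδ x₀
    have hδ : 0 < δ := lt_of_lt_of_le hε hεδ
    have hM0 : 0 ≤ M := le_trans (abs_nonneg _) (hb 0)
    set L : ℝ := δ / ε with hLdef
    have hL : 1 ≤ L := (one_le_div hε).2 hεδ
    set a : Fin n → ℝ := ε⁻¹ • x₀ with hadef
    -- step 1 : rewrite the cube as a pi set and scale
    have hIcc : Set.Icc x₀ (fun i => x₀ i + δ)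
        = univ.pi (fun i => Icc (x₀ i) (x₀ i + δ)) := by
      rw [Set.pi_univ_Icc]
    have hsmul : ε⁻¹ • univ.pi (fun i => Icc (x₀ i) (x₀ i + δ))
        = univ.pi (fun i => Icc (a i) (a i + L)) := by
      rw [smul_pi_Icc hε x₀ (fun i => x₀ i + δ)]
      have hfam : ∀ i, Icc (ε⁻¹ * x₀ i) (ε⁻¹ * (x₀ i + δ)) = Icc (a i) (a i + L) := by
        intro i
        have e2 : ε⁻¹ * (x₀ i + δ) = a i + L := by
          show ε⁻¹ * (x₀ i + δ) = ε⁻¹ * x₀ i + L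
          rw [hLdef, mul_add, div_eq_inv_mul]
        rw [e2]
        rfl
      rw [funext hfam]
    have hscale : (∫ x in Set.Icc x₀ (fun i => x₀ i + δ), φ (ε⁻¹ • x))
        = ε ^ n * ∫ x in univ.pi (fun i => Icc (a i) (a i + L)), φ x := by
      rw [hIcc, Measure.setIntegral_comp_smul_of_pos volume φ _ (inv_pos.mpr hε), hsmul,
        Module.finrank_fin_fun, inv_pow, inv_inv, smul_eq_mul]
    have hIco : ∫ x in univ.pi (fun i => Icc (a i) (a i + L)), φ x
        = ∫ x in univ.pi (fun i => Ico (a i) (a i + L)), φ x :=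
      pi_Icc_eq_Ico_integral φ a (fun i => a i + L)
    have hunit := unit_cell_integral φ
    have hfactor : (δ ^ n)⁻¹ * (ε ^ n
          * ∫ x in univ.pi (fun i => Ico (a i) (a i + L)), φ x)
        = (L ^ n)⁻¹ * ∫ x in univ.pi (fun i => Ico (a i) (a i + L)), φ x := by
      rw [← mul_assoc]; congr 1
      rw [hLdef, div_pow, inv_div]
      ring
    rw [hscale, hIco, hunit, hfactor]
    have hkey := key_estimate hn φ hφ hper hb hL a
    refine le_trans hkey ?_
    have hLpos : 0 < L := lt_of_lt_of_le one_pos hL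
    have heq : 2 * (n:ℝ) * M / L = 2 * n * M * (ε / δ) := by
      rw [hLdef]
      field_simp
    rw [heq]
    have : (2 * (n:ℝ)) * M * (ε/δ) ≤ (2 * n + 1) * M * (ε/δ) := by
      apply mul_le_mul_of_nonneg_right (mul_le_mul_of_nonneg_right (by linarith) hM0)
      positivity
    linarith
end

section
/- Let φ : ℝ → ℝ be a measurable function with period 1 (φ(y + 1) = φ(y) for all y ∈ ℝ) and |φ(y)| ≤ M for all y. Then for every 0 < ε ≤ δ and every a ∈ ℝ, | (1/δ) ∫_a^{a+δ} φ(x/ε) dx − ∫_0^1 φ(y) dy | ≤ 2 M ε / δ. -/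
open MeasureTheory intervalIntegral

/-- One-dimensional averaging lemma: the mean value of the oscillatory function
`x ↦ φ (x / ε)` over an interval of length `δ` differs from the mean of the
1-periodic bounded function `φ` over one period by at most `2 M ε / δ`. -/
theorem oscillatory_average_one_dim
    (φ : ℝ → ℝ) (M : ℝ) (hmeas : Measurable φ)
    (hper : ∀ y : ℝ, φ (y + 1) = φ y)
    (hbd : ∀ y : ℝ, |φ y| ≤ M)
    (ε δ a : ℝ) (hε : 0 < ε) (hεδ : ε ≤ δ) :
    |(1 / δ) * (∫ x in a..(a + δ), φ (x / ε)) - ∫ y in (0:ℝ)..1, φ y| ≤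
      2 * M * ε / δ := by
  have hδ : 0 < δ := hε.trans_le hεδ
  have hM : 0 ≤ M := (abs_nonneg _).trans (hbd 0)
  have hPer : Function.Periodic φ 1 := hper
  have hint : ∀ t₁ t₂ : ℝ, IntervalIntegrable φ volume t₁ t₂ := by
    intro t₁ t₂
    refine (_root_.intervalIntegrable_const (c := M)).mono_fun
      hmeas.aestronglyMeasurable (ae_of_all _ fun x => ?_)
    simpa [Real.norm_eq_abs, abs_of_nonneg hM] using hbd x
  set T : ℝ := ∫ y in (0:ℝ)..1, φ y with hT
  have hTbd : |T| ≤ M := by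
    have := intervalIntegral.norm_integral_le_of_norm_le_const
      (a := (0:ℝ)) (b := 1) (C := M) (f := φ) (fun x _ => by
        simpa [Real.norm_eq_abs] using hbd x)
    simpa [Real.norm_eq_abs] using this
  set b : ℝ := a / ε
  set L : ℝ := δ / ε
  have hL1 : 1 ≤ L := (one_le_div hε).2 hεδ
  have hLpos : 0 < L := lt_of_lt_of_le one_pos hL1
  set n : ℤ := ⌊L⌋
  have hnL : (n : ℝ) ≤ L := Int.floor_le L
  have hLn : L < n + 1 := Int.lt_floor_add_one L
  -- substitution x = ε y
  have hsub : (∫ x in a..(a + δ), φ (x / ε)) = ε * ∫ y in b..(b + L), φ y := by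
    have := intervalIntegral.integral_comp_div (a := a) (b := a + δ)
      (f := φ) (c := ε) hε.ne'
    rw [this]
    simp [b, L, add_div, smul_eq_mul]
  -- split the integral
  have hsplit : (∫ y in b..(b + L), φ y)
      = (∫ y in b..(b + n), φ y) + ∫ y in (b + n)..(b + L), φ y := by
    rw [intervalIntegral.integral_add_adjacent_intervals (hint _ _) (hint _ _)]
  have hmain : (∫ y in b..(b + (n:ℝ)), φ y) = n * T := by
    have := hPer.intervalIntegral_add_zsmul_eq n b hint
    have h2 := hPer.intervalIntegral_add_eq b 0
    simp only [zsmul_eq_mul, mul_one] at this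
    rw [this, h2]
    simp [hT]
  set R : ℝ := ∫ y in (b + n)..(b + L), φ y
  have hRbd : |R| ≤ M * (L - n) := by
    have := intervalIntegral.norm_integral_le_of_norm_le_const
      (a := b + (n:ℝ)) (b := b + L) (C := M) (f := φ) (fun x _ => by
        simpa [Real.norm_eq_abs] using hbd x)
    have habs : |L - (n:ℝ)| = L - n := abs_of_nonneg (by linarith)
    have hb : b + L - (b + (n:ℝ)) = L - n := by ring
    simp only [Real.norm_eq_abs, hb, habs] at this
    exact this
  have hLn1 : L - n ≤ 1 := by linarith
  have hRbd' : |R| ≤ M := hRbd.trans (by nlinarith)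
  -- rewrite LHS
  have hδL : δ = ε * L := by simp only [L]; field_simp
  have key : (1 / δ) * (∫ x in a..(a + δ), φ (x / ε)) - T
      = ((n : ℝ) - L) / L * T + R / L := by
    rw [hsub, hsplit, hmain, hδL]
    field_simp
    ring
  rw [key]
  have h1 : |((n : ℝ) - L) / L * T| ≤ M / L := by
    rw [abs_mul, abs_div, abs_of_pos hLpos]
    have hnl : |(n : ℝ) - L| ≤ 1 := by
      rw [abs_le]; constructor <;> linarith
    calc |(n:ℝ) - L| / L * |T| ≤ 1 / L * M := by
          apply mul_le_mul (by gcongr) hTbd (abs_nonneg _)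
          positivity
      _ = M / L := by ring
  have h2 : |R / L| ≤ M / L := by
    rw [abs_div, abs_of_pos hLpos]
    gcongr
  have : 2 * M * ε / δ = M / L + M / L := by
    rw [hδL]; field_simp; ring
  rw [this]
  calc |((n : ℝ) - L) / L * T + R / L| ≤ |((n : ℝ) - L) / L * T| + |R / L| := abs_add_le _ _
    _ ≤ M / L + M / L := add_le_add h1 h2
end
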